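/- Let 𝒜 be a complex Banach algebra, let L₀, L₁, L₂, L₃ ∈ 𝒜, let Λ ≥ 0 satisfy ‖Lₖ‖ ≤ Λ for every k ∈ {0,1,2,3}, and let τ ≥ 0. Define the second-order product formula S₂(τ) = e^{(τ/2)L₀} e^{(τ/2)L₁} e^{(τ/2)L₂} e^{(τ/2)L₃} e^{(τ/2)L₃} e^{(τ/2)L₂} e^{(τ/2)L₁} e^{(τ/2)L₀}. Then ‖exp(τ(L₀+L₁+L₂+L₃)) − S₂(τ)‖ ≤ ((4τΛ)³/3) · e^{4τΛ}. -/

import Mathlib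

open NormedSpace

/-- The second-order Suzuki–Lie–Trotter product formula
`S₂(τ) = e^{(τ/2)L₀} e^{(τ/2)L₁} e^{(τ/2)L₂} e^{(τ/2)L₃} e^{(τ/2)L₃} e^{(τ/2)L₂}
e^{(τ/2)L₁} e^{(τ/2)L₀}` for four generators in a complex Banach algebra. -/
noncomputable def trotterS2 {𝒜 : Type*} [NormedRing 𝒜] [NormedAlgebra ℂ 𝒜]
    (L₀ L₁ L₂ L₃ : 𝒜) (τ : ℝ) : 𝒜 :=
  exp (((τ / 2 : ℝ) : ℂ) • L₀) * exp (((τ / 2 : ℝ) : ℂ) • L₁) *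
    exp (((τ / 2 : ℝ) : ℂ) • L₂) * exp (((τ / 2 : ℝ) : ℂ) • L₃) *
    exp (((τ / 2 : ℝ) : ℂ) • L₃) * exp (((τ / 2 : ℝ) : ℂ) • L₂) *
    exp (((τ / 2 : ℝ) : ℂ) • L₁) * exp (((τ / 2 : ℝ) : ℂ) • L₀)


set_option linter.unusedSectionVars false

namespace TrotterAux

open Nat

lemma real_tail (x : ℝ) :
    Real.exp x - (1 + x + x^2/2) = ∑' n : ℕ, x^(n+3)/(n+3)! := by
  have hsum : Summable (fun n : ℕ => x^n / n !) := Real.summable_pow_div_factorial x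
  have h1 : Real.exp x = ∑' n : ℕ, x^n / n ! := by
    rw [Real.exp_eq_exp_ℝ, exp_eq_tsum_div]
  have h2 := hsum.sum_add_tsum_nat_add 3
  have h3 : ∑ i ∈ Finset.range 3, x^i / i ! = 1 + x + x^2/2 := by
    norm_num [Finset.sum_range_succ, Nat.factorial]
  rw [h1, ← h2, h3]
  ring


lemma tail_le (x : ℝ) (hx : 0 ≤ x) :
    Real.exp x - (1 + x + x^2/2) ≤ x^3/6 * Real.exp x := by
  have hsum : Summable (fun n : ℕ => x^n / n !) := Real.summable_pow_div_factorial x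
  rw [real_tail]
  have h1 : Real.exp x = ∑' n : ℕ, x^n / n ! := by
    rw [Real.exp_eq_exp_ℝ, exp_eq_tsum_div]
  rw [h1, ← tsum_mul_left]
  refine Summable.tsum_le_tsum (fun n => ?_) ((summable_nat_add_iff 3).2 hsum) (hsum.mul_left _)
  have hfacn : (n+3)! = (n+3)*(n+2)*(n+1)*n ! := by
    simp [Nat.factorial_succ]; ring
  have hfac : (6 : ℝ) * n ! ≤ ((n+3)! : ℝ) := by
    have h63 : (6:ℕ) ≤ (n+3)*(n+2)*(n+1) := by
      calc (6:ℕ) = 3*2*1 := by norm_num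
        _ ≤ (n+3)*(n+2)*(n+1) :=
          Nat.mul_le_mul (Nat.mul_le_mul (by omega) (by omega)) (by omega)
    have h6 : 6 * n ! ≤ ((n+3)*(n+2)*(n+1)) * n ! := Nat.mul_le_mul_right _ h63
    rw [hfacn]; exact_mod_cast h6
  have hrw : x^3/6 * (x^n/n !) = x^(n+3) / (6 * n !) := by
    rw [pow_add]; ring
  rw [hrw]
  have hpos : (0:ℝ) < 6 * n ! := by positivity
  exact div_le_div_of_nonneg_left (by positivity) hpos hfac |>.trans_eq rfl
    |>.trans_eq rfl

variable {𝒜 : Type*} [NormedRing 𝒜] [NormedAlgebra ℂ 𝒜] [CompleteSpace 𝒜]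

noncomputable def qq : List 𝒜 → 𝒜
  | [] => 0
  | a :: l => (2:ℂ)⁻¹ • (a * a) + a * l.sum + qq l


lemma norm_list_sum_le (s : ℝ) :
    ∀ l : List 𝒜, (∀ a ∈ l, ‖a‖ ≤ s) → ‖l.sum‖ ≤ l.length * s
  | [], _ => by simp
  | a :: l, h => by
    have ih := norm_list_sum_le s l (fun b hb => h b (List.mem_cons_of_mem a hb))
    simp only [List.sum_cons, List.length_cons]
    calc ‖a + l.sum‖ ≤ ‖a‖ + ‖l.sum‖ := norm_add_le _ _
      _ ≤ s + l.length * s := add_le_add (h a List.mem_cons_self) ih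
      _ = (↑(l.length + 1)) * s := by push_cast; ring


lemma norm_qq_le (s : ℝ) (hs : 0 ≤ s) :
    ∀ l : List 𝒜, (∀ a ∈ l, ‖a‖ ≤ s) → ‖qq l‖ ≤ (l.length * s)^2 / 2
  | [], _ => by simp [qq]
  | a :: l, h => by
    have hmem := fun b hb => h b (List.mem_cons_of_mem a hb)
    have ih := norm_qq_le s hs l hmem
    have hsum := norm_list_sum_le s l hmem
    have ha : ‖a‖ ≤ s := h a List.mem_cons_self
    have hm : (0:ℝ) ≤ (l.length : ℝ) * s := by positivity
    simp only [qq, List.length_cons]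
    calc ‖(2:ℂ)⁻¹ • (a * a) + a * l.sum + qq l‖
        ≤ ‖(2:ℂ)⁻¹ • (a * a)‖ + ‖a * l.sum‖ + ‖qq l‖ := norm_add₃_le
      _ ≤ 2⁻¹ * (s * s) + s * (l.length * s) + (l.length * s)^2/2 := by
          gcongr
          · rw [norm_smul]
            have : ‖(2:ℂ)⁻¹‖ = 2⁻¹ := by norm_num
            rw [this]
            gcongr
            exact le_trans (norm_mul_le _ _) (mul_le_mul ha ha (norm_nonneg _) hs)
          · exact le_trans (norm_mul_le _ _)
              (mul_le_mul ha hsum (norm_nonneg _) hs)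
      _ ≤ ((↑(l.length+1)) * s)^2/2 := by push_cast; nlinarith [sq_nonneg ((l.length:ℝ)*s), hs, hm]


lemma exp_trunc_le (s : ℝ) (a : 𝒜) (ha : ‖a‖ ≤ s) :
    ‖exp a - (1 + a + (2:ℂ)⁻¹ • (a * a))‖ ≤ Real.exp s - (1 + s + s^2/2) := by
  have hs0 : 0 ≤ s := le_trans (norm_nonneg a) ha
  have hsum : Summable (fun n : ℕ => ((n ! : ℂ))⁻¹ • a ^ n) := expSeries_summable' a
  have h2 := hsum.sum_add_tsum_nat_add 3
  have h3 : ∑ i ∈ Finset.range 3, ((i ! : ℂ))⁻¹ • a ^ i = 1 + a + (2:ℂ)⁻¹ • (a * a) := by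
    simp [Finset.sum_range_succ, Nat.factorial, pow_succ]
  have hexp : exp a = ∑' n : ℕ, ((n ! : ℂ))⁻¹ • a ^ n := by
    rw [exp_eq_tsum ℂ]
  have hkey : exp a - (1 + a + (2:ℂ)⁻¹ • (a * a))
      = ∑' n : ℕ, (((n+3)! : ℂ))⁻¹ • a ^ (n+3) := by
    rw [hexp, ← h2, h3]; abel
  rw [hkey, real_tail]
  have hterm : ∀ n : ℕ, ‖(((n+3)! : ℂ))⁻¹ • a ^ (n+3)‖ ≤ s^(n+3)/(n+3)! := by
    intro n
    rw [norm_smul]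
    have h1 : ‖(((n+3)! : ℂ))⁻¹‖ = (((n+3)! : ℝ))⁻¹ := by
      rw [norm_inv]; norm_num
    rw [h1]
    have h2 : ‖a ^ (n+3)‖ ≤ s^(n+3) :=
      le_trans (norm_pow_le' a (by omega)) (pow_le_pow_left₀ (norm_nonneg a) ha _)
    rw [div_eq_inv_mul]
    exact mul_le_mul_of_nonneg_left h2 (by positivity) |>.trans_eq rfl |>.trans_eq rfl
  have hsumr : Summable (fun n : ℕ => s^(n+3)/(n+3)!) :=
    (summable_nat_add_iff 3).2 (Real.summable_pow_div_factorial s)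
  have hsumn : Summable (fun n : ℕ => ‖(((n+3)! : ℂ))⁻¹ • a ^ (n+3)‖) :=
    Summable.of_nonneg_of_le (fun n => norm_nonneg _) hterm hsumr
  exact le_trans (norm_tsum_le_tsum_norm hsumn) (Summable.tsum_le_tsum hterm hsumn hsumr)

lemma key (s : ℝ) (hs : 0 ≤ s) :
    ∀ l : List 𝒜, (∀ a ∈ l, ‖a‖ ≤ s) →
      ‖(l.map exp).prod - (1 + l.sum + qq l)‖ ≤
        Real.exp (l.length * s) - (1 + l.length * s + (l.length * s)^2/2)
  | [], _ => by simp [qq]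
  | a :: l, h => by
    have hmem := fun b hb => h b (List.mem_cons_of_mem a hb)
    have ih := key s hs l hmem
    have ha : ‖a‖ ≤ s := h a List.mem_cons_self
    have hS1 : ‖l.sum‖ ≤ l.length * s := norm_list_sum_le s l hmem
    have hS2 : ‖qq l‖ ≤ (l.length * s)^2/2 := norm_qq_le s hs l hmem
    have hEa : ‖exp a - (1 + a + (2:ℂ)⁻¹ • (a * a))‖ ≤ Real.exp s - (1 + s + s^2/2) :=
      exp_trunc_le s a ha
    set x : ℝ := l.length * s with hx
    have hx0 : 0 ≤ x := by positivity
    set W : 𝒜 := (l.map exp).prod with hW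
    set S₁ : 𝒜 := l.sum with hS1d
    set S₂ : 𝒜 := qq l with hS2d
    set u : 𝒜 := (2:ℂ)⁻¹ • (a * a) with hu
    set Ea : 𝒜 := exp a - (1 + a + u) with hEad
    set El : 𝒜 := W - (1 + S₁ + S₂) with hEld
    have hu_norm : ‖u‖ ≤ s^2/2 := by
      rw [hu, norm_smul]
      have h2 : ‖(2:ℂ)⁻¹‖ = 2⁻¹ := by norm_num
      rw [h2]
      have : ‖a * a‖ ≤ s^2 := by
        calc ‖a * a‖ ≤ ‖a‖ * ‖a‖ := norm_mul_le _ _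
          _ ≤ s * s := mul_le_mul ha ha (norm_nonneg _) hs
          _ = s^2 := by ring
      linarith
    have hexp_a : exp a = 1 + a + u + Ea := by rw [hEad]; abel
    have hWeq : W = 1 + S₁ + S₂ + El := by rw [hEld]; abel
    have hgoal_id :
        exp a * W - (1 + (a + S₁) + (u + a * S₁ + S₂)) =
          El + a * El + u * El + Ea + Ea * S₁ + Ea * S₂ + Ea * El
            + a * S₂ + u * S₁ + u * S₂ := by
      rw [hexp_a, hWeq]; noncomm_ring
    have hlen : ((a :: l).length : ℝ) * s = x + s := by
      simp only [List.length_cons]; push_cast; ring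
    simp only [List.map_cons, List.prod_cons, List.sum_cons, qq]
    rw [hgoal_id]
    have hEl_norm : ‖El‖ ≤ Real.exp x - (1 + x + x^2/2) := ih
    have hEa0 : (0:ℝ) ≤ Real.exp s - (1 + s + s^2/2) := le_trans (norm_nonneg _) hEa
    have hEl0 : (0:ℝ) ≤ Real.exp x - (1 + x + x^2/2) := le_trans (norm_nonneg _) hEl_norm
    set r : ℝ := Real.exp s - (1 + s + s^2/2) with hr
    set f : ℝ := Real.exp x - (1 + x + x^2/2) with hf
    have bnd : ‖El + a * El + u * El + Ea + Ea * S₁ + Ea * S₂ + Ea * El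
            + a * S₂ + u * S₁ + u * S₂‖ ≤
        f + s * f + (s^2/2) * f + r + r * x + r * (x^2/2) + r * f
          + s * (x^2/2) + (s^2/2) * x + (s^2/2) * (x^2/2) := by
      have t1 : ‖a * El‖ ≤ s * f := le_trans (norm_mul_le _ _) (mul_le_mul ha hEl_norm (norm_nonneg _) hs)
      have t2 : ‖u * El‖ ≤ (s^2/2) * f := le_trans (norm_mul_le _ _) (mul_le_mul hu_norm hEl_norm (norm_nonneg _) (by positivity))
      have t3 : ‖Ea * S₁‖ ≤ r * x := le_trans (norm_mul_le _ _) (mul_le_mul hEa hS1 (norm_nonneg _) hEa0)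
      have t4 : ‖Ea * S₂‖ ≤ r * (x^2/2) := le_trans (norm_mul_le _ _) (mul_le_mul hEa hS2 (norm_nonneg _) hEa0)
      have t5 : ‖Ea * El‖ ≤ r * f := le_trans (norm_mul_le _ _) (mul_le_mul hEa hEl_norm (norm_nonneg _) hEa0)
      have t6 : ‖a * S₂‖ ≤ s * (x^2/2) := le_trans (norm_mul_le _ _) (mul_le_mul ha hS2 (norm_nonneg _) hs)
      have t7 : ‖u * S₁‖ ≤ (s^2/2) * x := le_trans (norm_mul_le _ _) (mul_le_mul hu_norm hS1 (norm_nonneg _) (by positivity))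
      have t8 : ‖u * S₂‖ ≤ (s^2/2) * (x^2/2) := le_trans (norm_mul_le _ _) (mul_le_mul hu_norm hS2 (norm_nonneg _) (by positivity))
      have tri : ∀ (p q : 𝒜) (cp cq : ℝ), ‖p‖ ≤ cp → ‖q‖ ≤ cq → ‖p + q‖ ≤ cp + cq :=
        fun p q cp cq hp hq => le_trans (norm_add_le _ _) (add_le_add hp hq)
      exact tri _ _ _ _ (tri _ _ _ _ (tri _ _ _ _ (tri _ _ _ _ (tri _ _ _ _ (tri _ _ _ _
        (tri _ _ _ _ (tri _ _ _ _ (tri _ _ _ _ hEl_norm t1) t2) hEa) t3) t4) t5) t6) t7) t8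
    refine le_trans bnd ?_
    rw [hlen, Real.exp_add, hr, hf]
    nlinarith [Real.exp_pos x, Real.exp_pos s]

end TrotterAux

/-- In a complex Banach algebra, if `‖Lₖ‖ ≤ Λ` for `k = 0,1,2,3` and
`τ ≥ 0`, then `‖exp(τ(L₀+L₁+L₂+L₃)) − S₂(τ)‖ ≤ ((4τΛ)³/3)·e^{4τΛ}`. -/
theorem trotter_second_order_step_bound {𝒜 : Type*} [NormedRing 𝒜] [NormedAlgebra ℂ 𝒜]
    [CompleteSpace 𝒜] (L₀ L₁ L₂ L₃ : 𝒜) (Λ τ : ℝ) (hΛ : 0 ≤ Λ)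
    (h0 : ‖L₀‖ ≤ Λ) (h1 : ‖L₁‖ ≤ Λ) (h2 : ‖L₂‖ ≤ Λ) (h3 : ‖L₃‖ ≤ Λ) (hτ : 0 ≤ τ) :
    ‖exp (((τ : ℝ) : ℂ) • (L₀ + L₁ + L₂ + L₃)) - trotterS2 L₀ L₁ L₂ L₃ τ‖ ≤
      (4 * τ * Λ) ^ 3 / 3 * Real.exp (4 * τ * Λ) := by
  set c : ℂ := ((τ / 2 : ℝ) : ℂ) with hc
  set A : 𝒜 := c • L₀ with hA
  set B : 𝒜 := c • L₁ with hB
  set C : 𝒜 := c • L₂ with hC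
  set D : 𝒜 := c • L₃ with hD
  set l : List 𝒜 := [A, B, C, D, D, C, B, A] with hl
  set s : ℝ := τ * Λ / 2 with hs
  have hs0 : 0 ≤ s := by positivity
  set b : 𝒜 := ((τ : ℝ) : ℂ) • (L₀ + L₁ + L₂ + L₃) with hb
  have hnormc : ‖c‖ = τ / 2 := by
    rw [hc, Complex.norm_real, Real.norm_eq_abs, abs_of_nonneg (by linarith)]
  have hmem : ∀ a ∈ l, ‖a‖ ≤ s := by
    intro a hmem
    have key : ∀ (L : 𝒜), ‖L‖ ≤ Λ → ‖c • L‖ ≤ s := by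
      intro L hL
      rw [norm_smul, hnormc, hs]
      calc τ / 2 * ‖L‖ ≤ τ / 2 * Λ := by gcongr
        _ = τ * Λ / 2 := by ring
    simp only [hl, List.mem_cons, List.not_mem_nil, or_false] at hmem
    rcases hmem with rfl|rfl|rfl|rfl|rfl|rfl|rfl|rfl
    exacts [key L₀ h0, key L₁ h1, key L₂ h2, key L₃ h3,
      key L₃ h3, key L₂ h2, key L₁ h1, key L₀ h0]
  -- trotterS2 as list product
  have htrot : trotterS2 L₀ L₁ L₂ L₃ τ = (l.map exp).prod := by
    simp only [hl, List.map_cons, List.map_nil, List.prod_cons, List.prod_nil, mul_one]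
    rw [trotterS2]
    simp only [← hc, ← hA, ← hB, ← hC, ← hD, mul_assoc]
  -- sum of list = b
  have hsum : l.sum = b := by
    have hτc : ((τ : ℝ) : ℂ) = c + c := by rw [hc]; push_cast; ring
    rw [hb, hτc, add_smul]
    simp only [hl, List.sum_cons, List.sum_nil, add_zero, hA, hB, hC, hD, smul_add]
    abel
  -- TrotterAux.qq l = (2:ℂ)⁻¹ • (b * b)
  have hq2 : (2:ℂ) • TrotterAux.qq l = l.sum * l.sum := by
    simp only [hl, TrotterAux.qq, List.sum_cons, List.sum_nil, add_zero, smul_add, smul_smul]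
    norm_num
    simp only [two_smul, mul_add, add_mul]
    abel
  have hq : TrotterAux.qq l = (2:ℂ)⁻¹ • (b * b) := by
    rw [← hsum, ← hq2, smul_smul]; norm_num
  -- norm of b
  have hbnorm : ‖b‖ ≤ 8 * s := by
    rw [hb, norm_smul, Complex.norm_real, Real.norm_eq_abs, abs_of_nonneg hτ]
    have : ‖L₀ + L₁ + L₂ + L₃‖ ≤ 4 * Λ := by
      calc ‖L₀ + L₁ + L₂ + L₃‖ ≤ ‖L₀‖ + ‖L₁‖ + ‖L₂‖ + ‖L₃‖ := by
            refine le_trans (norm_add_le _ _) ?_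
            gcongr
            refine le_trans (norm_add_le _ _) ?_
            gcongr
            exact norm_add_le _ _
        _ ≤ 4 * Λ := by linarith
    calc τ * ‖L₀ + L₁ + L₂ + L₃‖ ≤ τ * (4 * Λ) := by gcongr
      _ = 8 * s := by rw [hs]; ring
  set x : ℝ := 8 * s with hx
  have hx0 : 0 ≤ x := by positivity
  have hxval : x = 4 * τ * Λ := by rw [hx, hs]; ring
  have hbound1 : ‖exp b - (1 + b + (2:ℂ)⁻¹ • (b * b))‖ ≤
      Real.exp x - (1 + x + x^2/2) := TrotterAux.exp_trunc_le x b hbnorm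
  have hbound2 : ‖(l.map exp).prod - (1 + l.sum + TrotterAux.qq l)‖ ≤
      Real.exp x - (1 + x + x^2/2) := by
    have := TrotterAux.key s hs0 l hmem
    have hlen : (l.length : ℝ) * s = x := by
      simp only [hl, List.length_cons, List.length_nil]
      push_cast; ring
    rwa [hlen] at this
  have hPeq : (1 : 𝒜) + l.sum + TrotterAux.qq l = 1 + b + (2:ℂ)⁻¹ • (b * b) := by
    rw [hsum, hq]
  rw [htrot]
  calc ‖exp b - (l.map exp).prod‖
      = ‖(exp b - (1 + b + (2:ℂ)⁻¹ • (b * b))) +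
          ((1 + l.sum + TrotterAux.qq l) - (l.map exp).prod)‖ := by rw [hPeq]; congr 1; abel
    _ ≤ ‖exp b - (1 + b + (2:ℂ)⁻¹ • (b * b))‖ +
          ‖(1 + l.sum + TrotterAux.qq l) - (l.map exp).prod‖ := norm_add_le _ _
    _ ≤ (Real.exp x - (1 + x + x^2/2)) + (Real.exp x - (1 + x + x^2/2)) := by
        refine add_le_add hbound1 ?_
        rw [norm_sub_rev]; exact hbound2
    _ ≤ (4 * τ * Λ) ^ 3 / 3 * Real.exp (4 * τ * Λ) := by
        have := TrotterAux.tail_le x hx0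
        rw [← hxval]
        nlinarith [Real.exp_pos x]
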